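/- The map τ defined on the generators of the ring of symmetric functions by τ(h_k) = ∑_{ℓ=0}^k C(k-1, k-ℓ) e_ℓ (for k ≥ 1) extends to a ring endomorphism of Λ which is an involution: τ ∘ τ = id. -/

import Mathlib

/-- The ring of symmetric functions over `ℚ`: the polynomial ring on countably many free
generators, `X n` playing the role of `h_{n+1}`. -/
abbrev SymmFn : Type := MvPolynomial ℕ ℚ

/-- The complete homogeneous symmetric functions (`h 0 = 1`, `h (n+1) = X n`). -/
noncomputable def h : ℕ → SymmFn
  | 0 => 1
  | n + 1 => MvPolynomial.X n

/-- The elementary symmetric functions `e_n`, expressed in terms of the `h`'s via the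
classical recursion `e_n = ∑_{i=1}^n (-1)^{i-1} h_i e_{n-i}` (equivalent to
`∑_{i} (-1)^i e_i h_{n-i} = 0`, i.e. `E(t) H(-t) = 1`). -/
noncomputable def e : ℕ → SymmFn
  | 0 => 1
  | n + 1 => ∑ i ∈ Finset.range (n + 1), (-1 : ℚ) ^ i • (h (i + 1) * e (n - i))
  decreasing_by exact Nat.lt_succ_of_le (Nat.sub_le n i)

/-- The endomorphism `τ` of the ring of symmetric functions determined on generators by
`τ(h_k) = ∑_{ℓ=0}^k C(k-1, k-ℓ) e_ℓ` (for `k ≥ 1`). Here the generator `X n` is `h_{n+1}`,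
so `C(k-1, k-ℓ) = C(n, n+1-ℓ)`. -/
noncomputable def τ : SymmFn →ₐ[ℚ] SymmFn :=
  MvPolynomial.aeval fun n => ∑ l ∈ Finset.range (n + 2), (n.choose (n + 1 - l) : ℚ) • e l

open Finset

lemma h_zero : h 0 = 1 := rfl
lemma e_zero : e 0 = 1 := by rw [e]
lemma e_succ (n : ℕ) : e (n+1) = ∑ i ∈ range (n + 1), (-1 : ℚ) ^ i • (h (i + 1) * e (n - i)) := by
  rw [e]

noncomputable def gsym (k : ℕ) : SymmFn :=
  ∑ l ∈ range (k+1), ((k-1).choose (k-l) : ℚ) • e l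

noncomputable def fsym (k : ℕ) : SymmFn :=
  ∑ l ∈ range (k+1), ((-1:ℚ)^(k-l) * ((k-1).choose (k-l) : ℚ)) • h l

lemma gsym_zero : gsym 0 = 1 := by simp [gsym, e_zero]
lemma fsym_zero : fsym 0 = 1 := by simp [fsym, h_zero]

lemma neg_one_pow_congr' {p q : ℕ} (hpq : p % 2 = q % 2) : ((-1:ℚ))^p = (-1)^q := by
  rcases Nat.even_or_odd p with hp | hp
  · have h1 := Nat.even_iff.1 hp
    rw [hp.neg_one_pow, (Nat.even_iff.2 (by omega)).neg_one_pow]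
  · have h1 := Nat.odd_iff.1 hp
    rw [hp.neg_one_pow, (Nat.odd_iff.2 (by omega)).neg_one_pow]

lemma gsym_eq (k : ℕ) :
    gsym k = ∑ j ∈ range (k+1), ((k-1).choose j : ℚ) • e (k-j) := by
  rw [gsym, ← Finset.sum_range_reflect]
  refine Finset.sum_congr rfl fun j hj => ?_
  simp only [mem_range, Nat.lt_succ_iff] at hj
  have h1 : k+1-1-j = k-j := by omega
  have h2 : k - (k-j) = j := Nat.sub_sub_self hj
  rw [h1, h2]

lemma fsym_eq (k : ℕ) :
    fsym k = ∑ j ∈ range (k+1), ((-1:ℚ)^j * ((k-1).choose j : ℚ)) • h (k-j) := by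
  rw [fsym, ← Finset.sum_range_reflect]
  refine Finset.sum_congr rfl fun j hj => ?_
  simp only [mem_range, Nat.lt_succ_iff] at hj
  have h1 : k+1-1-j = k-j := by omega
  have h2 : k - (k-j) = j := Nat.sub_sub_self hj
  rw [h1, h2]

lemma tau_h : ∀ k, τ (h k) = gsym k
  | 0 => by simp [h_zero, gsym_zero]
  | n+1 => by
    show τ (MvPolynomial.X n) = gsym (n+1)
    rw [τ, MvPolynomial.aeval_X, gsym]
    simp

lemma hrel (n : ℕ) :
    ∑ k ∈ range (n+2), (-1:ℚ)^k • (h k * e (n+1-k)) = 0 := by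
  rw [Finset.sum_range_succ']
  have : ∀ i ∈ range (n+1),
      (-1:ℚ)^(i+1) • (h (i+1) * e (n+1-(i+1))) = -((-1:ℚ)^i • (h (i+1) * e (n-i))) := by
    intro i hi
    rw [pow_succ, mul_neg_one, neg_smul, Nat.succ_sub_succ_eq_sub]
  rw [Finset.sum_congr rfl this, Finset.sum_neg_distrib]
  simp [h_zero, ← e_succ]

lemma erel (s : ℕ) (hs : s ≠ 0) :
    ∑ b ∈ range (s+1), (-1:ℚ)^b • (e (s-b) * h b) = 0 := by
  obtain ⟨n, rfl⟩ := Nat.exists_eq_succ_of_ne_zero hs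
  have := hrel n
  rw [← this]
  refine Finset.sum_congr rfl fun b hb => ?_
  rw [mul_comm]

lemma units_inv_inj {M : Type*} [Monoid M] {u v : Mˣ} (huv : u.inv = v.inv) : u = v := by
  have : u⁻¹ = v⁻¹ := Units.ext huv
  simpa using congrArg (·⁻¹) this

lemma inv_coeff (d i : ℕ) :
    PowerSeries.coeff i (PowerSeries.invOneSubPow ℚ d).val = ((d+i-1).choose i : ℚ) := by
  cases d with
  | zero =>
    rw [PowerSeries.invOneSubPow_zero]
    cases i with
    | zero => simp
    | succ i => simp [Nat.choose_eq_zero_of_lt (Nat.lt_succ_self i), PowerSeries.coeff_one]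
  | succ d =>
    rw [PowerSeries.invOneSubPow_val_succ_eq_mk_add_choose, PowerSeries.coeff_mk]
    have h1 : d + 1 + i - 1 = d + i := by omega
    rw [h1]
    have h2 : (d+i).choose d = (d+i).choose i := by
      have := Nat.choose_symm (n := d+i) (k := i) (by omega)
      rwa [Nat.add_sub_cancel] at this
    rw [h2]

lemma invOneSubPow_add (a b : ℕ) :
    PowerSeries.invOneSubPow ℚ a * PowerSeries.invOneSubPow ℚ b
      = PowerSeries.invOneSubPow ℚ (a+b) := by
  apply units_inv_inj
  show (PowerSeries.invOneSubPow ℚ b).inv * (PowerSeries.invOneSubPow ℚ a).inv = _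
  rw [PowerSeries.invOneSubPow_inv_eq_one_sub_pow, PowerSeries.invOneSubPow_inv_eq_one_sub_pow,
    PowerSeries.invOneSubPow_inv_eq_one_sub_pow, ← pow_add, Nat.add_comm]

lemma Vlem (a b s : ℕ) :
    ∑ i ∈ range (s+1), ((a+i-1).choose i : ℚ) * ((b+(s-i)-1).choose (s-i) : ℚ)
      = ((a+b+s-1).choose s : ℚ) := by
  have hval : (PowerSeries.invOneSubPow ℚ a).val * (PowerSeries.invOneSubPow ℚ b).val
      = (PowerSeries.invOneSubPow ℚ (a+b)).val := by
    rw [← invOneSubPow_add]; rfl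
  have := congrArg (PowerSeries.coeff s) hval
  rw [PowerSeries.coeff_mul, Finset.Nat.sum_antidiagonal_eq_sum_range_succ_mk] at this
  simp only [inv_coeff] at this
  exact this

lemma grel (m : ℕ) (hm : m ≠ 0) :
    ∑ k ∈ range (m+1), (-1:ℚ)^k • (gsym k * fsym (m-k)) = 0 := by
  have stepA : ∀ k ∈ range (m+1), (-1:ℚ)^k • (gsym k * fsym (m-k))
      = ∑ j₁ ∈ range (k+1), ∑ j₂ ∈ range (m-k+1),
          ((-1:ℚ)^k * ((k-1).choose j₁ : ℚ) * ((-1:ℚ)^j₂ * ((m-k-1).choose j₂ : ℚ)))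
            • (e (k-j₁) * h (m-k-j₂)) := by
    intro k hk
    rw [gsym_eq, fsym_eq, Finset.sum_mul_sum, Finset.smul_sum]
    refine Finset.sum_congr rfl fun j₁ _ => ?_
    rw [Finset.smul_sum]
    refine Finset.sum_congr rfl fun j₂ _ => ?_
    rw [smul_mul_smul_comm, smul_smul]
    congr 1
    ring
  rw [Finset.sum_congr rfl stepA]
  have stepP : ∀ k ∈ range (m+1),
      (∑ j₁ ∈ range (k+1), ∑ j₂ ∈ range (m-k+1),
          ((-1:ℚ)^k * ((k-1).choose j₁ : ℚ) * ((-1:ℚ)^j₂ * ((m-k-1).choose j₂ : ℚ)))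
            • (e (k-j₁) * h (m-k-j₂)))
      = ∑ p ∈ range (k+1) ×ˢ range (m-k+1),
          ((-1:ℚ)^k * ((k-1).choose p.1 : ℚ) * ((-1:ℚ)^p.2 * ((m-k-1).choose p.2 : ℚ)))
            • (e (k-p.1) * h (m-k-p.2)) := by
    intro k _
    rw [Finset.sum_product' (f := fun j₁ j₂ =>
      ((-1:ℚ)^k * ((k-1).choose j₁ : ℚ) * ((-1:ℚ)^j₂ * ((m-k-1).choose j₂ : ℚ)))
            • (e (k-j₁) * h (m-k-j₂)))]
  rw [Finset.sum_congr rfl stepP,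
    Finset.sum_sigma' (range (m+1)) (fun k => range (k+1) ×ˢ range (m-k+1))
      (fun k p => ((-1:ℚ)^k * ((k-1).choose p.1 : ℚ) * ((-1:ℚ)^p.2 * ((m-k-1).choose p.2 : ℚ)))
            • (e (k-p.1) * h (m-k-p.2)))]
  have stepB : (∑ x ∈ (range (m+1)).sigma (fun k => range (k+1) ×ˢ range (m-k+1)),
        ((-1:ℚ)^x.1 * ((x.1-1).choose x.2.1 : ℚ)
          * ((-1:ℚ)^x.2.2 * ((m-x.1-1).choose x.2.2 : ℚ)))
            • (e (x.1-x.2.1) * h (m-x.1-x.2.2)))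
      = ∑ x ∈ (range (m+1)).sigma (fun s => range (s+1) ×ˢ range (m-s+1)),
        (((-1:ℚ)^m * (-1:ℚ)^x.2.1)
          * (((x.1-x.2.1+x.2.2-1).choose x.2.2 : ℚ)
            * ((x.2.1+(m-x.1-x.2.2)-1).choose (m-x.1-x.2.2) : ℚ)))
            • (e (x.1-x.2.1) * h x.2.1) := by
    refine Finset.sum_nbij' (fun x => ⟨m - x.2.1 - x.2.2, (m - x.1 - x.2.2, x.2.1)⟩)
      (fun x => ⟨x.1 - x.2.1 + x.2.2, (x.2.2, m - x.1 - x.2.2)⟩) ?_ ?_ ?_ ?_ ?_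
    · rintro ⟨k, j₁, j₂⟩ hx
      simp only [mem_sigma, mem_product, mem_range, Nat.lt_succ_iff] at hx ⊢
      omega
    · rintro ⟨s, b, i⟩ hx
      simp only [mem_sigma, mem_product, mem_range, Nat.lt_succ_iff] at hx ⊢
      omega
    · rintro ⟨k, j₁, j₂⟩ hx
      simp only [mem_sigma, mem_product, mem_range, Nat.lt_succ_iff] at hx
      simp only [Sigma.mk.inj_iff, Prod.mk.injEq, heq_eq_eq]
      exact ⟨by omega, trivial, by omega⟩
    · rintro ⟨s, b, i⟩ hx
      simp only [mem_sigma, mem_product, mem_range, Nat.lt_succ_iff] at hx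
      simp only [Sigma.mk.inj_iff, Prod.mk.injEq, heq_eq_eq]
      exact ⟨by omega, by omega, trivial⟩
    · rintro ⟨k, j₁, j₂⟩ hx
      simp only [mem_sigma, mem_product, mem_range, Nat.lt_succ_iff] at hx
      obtain ⟨hk, hj₁, hj₂⟩ := hx
      have e1 : m - j₁ - j₂ - (m - k - j₂) = k - j₁ := by omega
      have e2 : m - (m - j₁ - j₂) - j₁ = j₂ := by omega
      simp only [e1, e2]
      have e3 : k - j₁ + j₁ = k := by omega
      have e4 : m - k - j₂ + j₂ = m - k := by omega
      rw [e3, e4]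
      have sgn : (-1:ℚ)^m * (-1:ℚ)^(m-k-j₂) = (-1:ℚ)^k * (-1:ℚ)^j₂ := by
        rw [← pow_add, ← pow_add]; exact neg_one_pow_congr' (by omega)
      congr 1
      rw [sgn]
      ring
  rw [stepB, Finset.sum_sigma]
  refine Finset.sum_eq_zero fun s hs => ?_
  simp only [mem_range, Nat.lt_succ_iff] at hs
  rw [Finset.sum_product (range (s+1)) (range (m-s+1)) (fun p : ℕ × ℕ =>
      (((-1:ℚ)^m * (-1:ℚ)^p.1)
          * (((s-p.1+p.2-1).choose p.2 : ℚ)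
            * ((p.1+(m-s-p.2)-1).choose (m-s-p.2) : ℚ)))
            • (e (s-p.1) * h p.1))]
  have hin : ∀ b ∈ range (s+1),
      (∑ i ∈ range (m-s+1),
        (((-1:ℚ)^m * (-1:ℚ)^b)
          * (((s-b+i-1).choose i : ℚ) * ((b+(m-s-i)-1).choose (m-s-i) : ℚ)))
            • (e (s-b) * h b))
      = (((-1:ℚ)^m * (-1:ℚ)^b) * (((m-1).choose (m-s) : ℚ))) • (e (s-b) * h b) := by
    intro b hb
    simp only [mem_range, Nat.lt_succ_iff] at hb
    rw [← Finset.sum_smul, ← Finset.mul_sum, Vlem (s-b) b (m-s)]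
    have : s - b + b + (m - s) = m := by omega
    rw [this]
  rw [Finset.sum_congr rfl hin]
  by_cases hs0 : s = 0
  · subst hs0
    refine Finset.sum_eq_zero fun b _ => ?_
    have hch : (m-1).choose (m-0) = 0 := Nat.choose_eq_zero_of_lt (by omega)
    rw [hch]
    simp
  · have key : ∀ b ∈ range (s+1),
        (((-1:ℚ)^m * (-1:ℚ)^b) * (((m-1).choose (m-s) : ℚ))) • (e (s-b) * h b)
        = ((-1:ℚ)^m * (((m-1).choose (m-s) : ℚ))) • ((-1:ℚ)^b • (e (s-b) * h b)) := by
      intro b _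
      rw [smul_smul]
      congr 1
      ring
    rw [Finset.sum_congr rfl key, ← Finset.smul_sum, erel s hs0, smul_zero]

lemma tau_e : ∀ k, τ (e k) = fsym k := by
  intro k
  induction k using Nat.strong_induction_on with
  | _ k ih =>
    match k with
    | 0 => rw [e_zero, map_one, fsym_zero]
    | n+1 =>
      rw [e_succ, map_sum]
      have hterm : ∀ i ∈ range (n+1),
          τ ((-1:ℚ)^i • (h (i+1) * e (n-i))) = (-1:ℚ)^i • (gsym (i+1) * fsym (n-i)) := by
        intro i hi
        rw [map_smul, map_mul, tau_h, ih (n-i) (by omega)]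
      rw [Finset.sum_congr rfl hterm]
      have hg := grel (n+1) (by omega)
      rw [Finset.sum_range_succ'] at hg
      have h2 : ∀ i ∈ range (n+1),
          (-1:ℚ)^(i+1) • (gsym (i+1) * fsym (n+1-(i+1)))
            = -((-1:ℚ)^i • (gsym (i+1) * fsym (n-i))) := by
        intro i hi
        rw [pow_succ, mul_neg_one, neg_smul, Nat.succ_sub_succ_eq_sub]
      rw [Finset.sum_congr rfl h2, Finset.sum_neg_distrib] at hg
      simp only [pow_zero, one_smul, Nat.sub_zero, gsym_zero, one_mul] at hg
      rwa [neg_add_eq_zero] at hg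

lemma altq (N : ℕ) :
    ∑ i ∈ range (N+1), (-1:ℚ)^i * (N.choose i : ℚ) = if N = 0 then 1 else 0 := by
  have h1 := Int.alternating_sum_range_choose (n := N)
  have h2 := congrArg (fun z : ℤ => (z : ℚ)) h1
  push_cast at h2
  rw [h2]

lemma coeffsum (n m' : ℕ) (hm : m' ≤ n+1) :
    ∑ k ∈ range (n+2-m'), ((n.choose (n+1-(m'+k)) : ℚ) * ((-1:ℚ)^k * ((m'+k-1).choose k : ℚ)))
      = if m' = n+1 then 1 else 0 := by
  match m' with
  | 0 =>
    rw [if_neg (by omega)]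
    refine Finset.sum_eq_zero fun k hk => ?_
    match k with
    | 0 => simp [Nat.choose_eq_zero_of_lt (Nat.lt_succ_self n)]
    | k+1 =>
      have hz : (0+(k+1)-1).choose (k+1) = 0 := Nat.choose_eq_zero_of_lt (by omega)
      rw [hz]
      simp
  | r+1 =>
    have hr : r ≤ n := by omega
    have hrange : n+2-(r+1) = (n-r)+1 := by omega
    rw [hrange]
    have hstep : ∀ k ∈ range ((n-r)+1),
        (n.choose (n+1-((r+1)+k)) : ℚ) * ((-1:ℚ)^k * (((r+1)+k-1).choose k : ℚ))
          = (n.choose r : ℚ) * ((-1:ℚ)^k * ((n-r).choose k : ℚ)) := by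
      intro k hk
      simp only [mem_range, Nat.lt_succ_iff] at hk
      have h1 : n+1-((r+1)+k) = n-(r+k) := by omega
      have h2 : (r+1)+k-1 = r+k := by omega
      rw [h1, h2]
      have h3 : n.choose (n-(r+k)) = n.choose (r+k) := Nat.choose_symm (by omega)
      have h4 : (r+k).choose k = (r+k).choose r := by
        have hh := Nat.choose_symm (n := r+k) (k := k) (by omega)
        rw [Nat.add_sub_cancel] at hh
        exact hh.symm
      have h5 : n.choose (r+k) * (r+k).choose r = n.choose r * (n-r).choose k := by
        have := Nat.choose_mul (n := n) (k := r+k) (s := r) (by omega)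
        rwa [Nat.add_sub_cancel_left] at this
      rw [h3, h4]
      have h6 : ((n.choose (r+k) : ℚ)) * ((r+k).choose r : ℚ)
          = (n.choose r : ℚ) * ((n-r).choose k : ℚ) := by exact_mod_cast congrArg Nat.cast h5
      linear_combination (-1:ℚ)^k * h6
    rw [Finset.sum_congr rfl hstep, ← Finset.mul_sum, altq (n-r)]
    by_cases hrn : r = n
    · subst hrn
      simp
    · rw [if_neg (by omega), if_neg (by omega), mul_zero]

lemma tau_tau_X (n : ℕ) : τ (τ (MvPolynomial.X n : SymmFn)) = MvPolynomial.X n := by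
  show τ (τ (h (n+1))) = h (n+1)
  rw [tau_h (n+1), gsym, map_sum]
  have hterm : ∀ l ∈ range (n+1+1),
      τ (((n+1-1).choose (n+1-l) : ℚ) • e l)
        = ∑ m' ∈ range (l+1),
            ((n.choose (n+1-(m'+(l-m'))) : ℚ)
              * ((-1:ℚ)^(l-m') * ((m'+(l-m')-1).choose (l-m') : ℚ))) • h m' := by
    intro l hl
    simp only [mem_range, Nat.lt_succ_iff] at hl
    rw [map_smul, tau_e, fsym, Finset.smul_sum]
    refine Finset.sum_congr rfl fun m' hm' => ?_
    simp only [mem_range, Nat.lt_succ_iff] at hm'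
    rw [smul_smul]
    have hx : m' + (l - m') = l := by omega
    rw [hx]
    congr 1
  rw [Finset.sum_congr rfl hterm,
    Finset.sum_range_diag_flip (n+2) (fun x y =>
      ((n.choose (n+1-(x+y)) : ℚ) * ((-1:ℚ)^y * ((x+y-1).choose y : ℚ))) • h x)]
  have hinner : ∀ m' ∈ range (n+2),
      (∑ k ∈ range (n+2-m'),
        ((n.choose (n+1-(m'+k)) : ℚ) * ((-1:ℚ)^k * ((m'+k-1).choose k : ℚ))) • h m')
      = (if m' = n+1 then (1:ℚ) else 0) • h m' := by
    intro m' hm'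
    simp only [mem_range, Nat.lt_succ_iff] at hm'
    rw [← Finset.sum_smul, coeffsum n m' (by omega)]
  rw [Finset.sum_congr rfl hinner]
  simp only [ite_smul, one_smul, zero_smul]
  rw [Finset.sum_ite_eq' (range (n+2)) (n+1) (fun m' => h m')]
  simp


/-- `τ` is an involution: `τ ∘ τ = id`. -/
theorem stmt11 : ∀ p : SymmFn, τ (τ p) = p := by
  have hcomp : τ.comp τ = AlgHom.id ℚ SymmFn := by
    apply MvPolynomial.algHom_ext
    intro n
    simp only [AlgHom.comp_apply, AlgHom.id_apply]
    exact tau_tau_X n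
  intro p
  have := DFunLike.congr_fun hcomp p
  simpa using this
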